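/- Let d ≥ 1, T > 0 and γ_∞, γ_0 ∈ (0,2]. For z ∈ ℝ^d∖{0} and t > 0 define S(z,t) := t^{−d/γ_∞} if |z| ≤ min(t^{1/γ_∞},1); S(z,t) := t |z|^{−d−γ_∞} if t^{1/γ_∞} < |z| ≤ 1; and S(z,t) := t |z|^{−d−min(γ_∞,γ_0)} if |z| > 1. Then there exists a constant C > 0 (depending only on d, T, γ_∞, γ_0) such that for all z ∈ ℝ^d∖{0}: ∫_0^T S(z,t) dt ≤ C · Q(z), where Q(z) := |z|^{−d−min(γ_0,γ_∞)} for |z| ≥ 1 and Q(z) := 1 + |log|z|| + |z|^{−d+γ_∞} for 0 < |z| < 1. -/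

import Mathlib

open MeasureTheory Set intervalIntegral

private lemma tail_bound (d γ T : ℝ) (hγ : 0 < γ) (hγ2 : γ ≤ 2) (hT : 0 < T) :
    ∃ C > (0:ℝ), ∀ r : ℝ, 0 < r → r ≤ 1 → r ^ γ ≤ T →
      (∫ t in (r ^ γ)..T, t ^ (-(d/γ))) ≤ C * (1 + |Real.log r| + r ^ (-d + γ)) := by
  have hexp : γ * (-(d/γ) + 1) = -d + γ := by field_simp
  rcases lt_trichotomy (d/γ) 1 with h | h | h
  · refine ⟨|T ^ (-(d/γ) + 1) / (-(d/γ) + 1)| + 1, by positivity, ?_⟩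
    intro r hr hr1 hrT
    rw [integral_rpow (Or.inl (by linarith : (-1:ℝ) < -(d/γ)))]
    have h1 : (0:ℝ) ≤ (r ^ γ) ^ (-(d/γ) + 1) := Real.rpow_nonneg (Real.rpow_nonneg hr.le γ) _
    have hE : (1:ℝ) ≤ 1 + |Real.log r| + r ^ (-d + γ) := by
      linarith [abs_nonneg (Real.log r), Real.rpow_nonneg hr.le (-d + γ)]
    have hx : (0:ℝ) < -(d/γ) + 1 := by linarith
    have h2 : (T ^ (-(d/γ) + 1) - (r ^ γ) ^ (-(d/γ) + 1)) / (-(d/γ) + 1)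
        ≤ T ^ (-(d/γ) + 1) / (-(d/γ) + 1) := by
      exact (div_le_div_iff_of_pos_right hx).mpr (by linarith)
    have h3 := le_abs_self (T ^ (-(d/γ) + 1) / (-(d/γ) + 1))
    have h4 : (0:ℝ) ≤ |T ^ (-(d/γ) + 1) / (-(d/γ) + 1)| + 1 := by positivity
    nlinarith [mul_le_mul_of_nonneg_left hE h4]
  · refine ⟨|Real.log T| + 2, by positivity, ?_⟩
    intro r hr hr1 hrT
    have hs : 0 < r ^ γ := Real.rpow_pos_of_pos hr γ
    rw [show -(d/γ) = (-1:ℝ) by rw [h]]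
    simp only [Real.rpow_neg_one]
    rw [integral_inv (Set.notMem_uIcc_of_lt hs hT), Real.log_div hT.ne' hs.ne',
      Real.log_rpow hr]
    have hlr : Real.log r ≤ 0 := Real.log_nonpos hr.le hr1
    have habs : |Real.log r| = -Real.log r := abs_of_nonpos hlr
    have hp : (0:ℝ) ≤ r ^ (-d + γ) := Real.rpow_nonneg hr.le _
    have hlt := le_abs_self (Real.log T)
    have h0 : (0:ℝ) ≤ |Real.log T| := abs_nonneg _
    nlinarith [mul_nonneg (by positivity : (0:ℝ) ≤ |Real.log T| + 2) hp,
      mul_nonneg (by linarith : (0:ℝ) ≤ 2 - γ) (by linarith : (0:ℝ) ≤ -Real.log r),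
      mul_nonneg h0 (by linarith : (0:ℝ) ≤ -Real.log r)]
  · refine ⟨|1 / (-(d/γ) + 1)| + 1, by positivity, ?_⟩
    intro r hr hr1 hrT
    have hs : 0 < r ^ γ := Real.rpow_pos_of_pos hr γ
    have hne : -(d/γ) ≠ -1 := fun hc => absurd (neg_inj.mp hc) (by linarith)
    rw [integral_rpow (Or.inr ⟨hne, Set.notMem_uIcc_of_lt hs hT⟩)]
    have hsx : (r ^ γ) ^ (-(d/γ) + 1) = r ^ (-d + γ) := by
      rw [← Real.rpow_mul hr.le, hexp]
    rw [hsx]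
    have hx : -(d/γ) + 1 < 0 := by linarith
    have hT0 : (0:ℝ) ≤ T ^ (-(d/γ) + 1) := Real.rpow_nonneg hT.le _
    have hp : (0:ℝ) ≤ r ^ (-d + γ) := Real.rpow_nonneg hr.le _
    have hE0 : (0:ℝ) ≤ 1 + |Real.log r| + r ^ (-d + γ) := by positivity
    have hEp : r ^ (-d + γ) + 1 ≤ 1 + |Real.log r| + r ^ (-d + γ) := by
      linarith [abs_nonneg (Real.log r)]
    rw [div_le_iff_of_neg hx]
    have e1 : (|1 / (-(d/γ) + 1)| + 1) * (1 + |Real.log r| + r ^ (-d + γ)) * (-(d/γ) + 1)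
        = -(1 + |Real.log r| + r ^ (-d + γ)) + (1 + |Real.log r| + r ^ (-d + γ)) * (-(d/γ) + 1) := by
      have hinv : (1 / (-(d/γ) + 1)) * (-(d/γ) + 1) = 1 := one_div_mul_cancel hx.ne
      rw [abs_of_nonpos (by apply div_nonpos_of_nonneg_of_nonpos <;> linarith)]
      linear_combination (-(1 + |Real.log r| + r ^ (-d + γ))) * hinv
    rw [e1]
    have hEx : (1 + |Real.log r| + r ^ (-d + γ)) * (-(d/γ) + 1) ≤ 0 :=
      mul_nonpos_of_nonneg_of_nonpos hE0 hx.le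
    linarith

private lemma small_bound (d γ T : ℝ) (hγ : 0 < γ) (hγ2 : γ ≤ 2) (hT : 0 < T) :
    ∃ C > (0:ℝ), ∀ r : ℝ, 0 < r → r ≤ 1 →
      (∫ t in Ioc (0:ℝ) T, if r ^ γ ≤ t then t ^ (-(d/γ)) else t * r ^ (-d - γ))
        ≤ C * (1 + |Real.log r| + r ^ (-d + γ)) := by
  obtain ⟨C₁, hC₁, htail⟩ := tail_bound d γ T hγ hγ2 hT
  refine ⟨C₁ + 1, by linarith, ?_⟩
  intro r hr hr1
  have hs : 0 < r ^ γ := Real.rpow_pos_of_pos hr γ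
  have hp : (0:ℝ) ≤ r ^ (-d + γ) := Real.rpow_nonneg hr.le _
  have hla : (0:ℝ) ≤ |Real.log r| := abs_nonneg _
  have hid : r ^ (-d - γ) * (r ^ γ) ^ 2 = r ^ (-d + γ) := by
    rw [sq, ← Real.rpow_add hr, ← Real.rpow_add hr]
    norm_num
  have hc0 : (0:ℝ) ≤ r ^ (-d - γ) := Real.rpow_nonneg hr.le _
  rcases le_or_gt (r ^ γ) T with hsT | hsT
  · have heq1 : EqOn (fun t => if r ^ γ ≤ t then t ^ (-(d/γ)) else t * r ^ (-d - γ))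
        (fun t => t * r ^ (-d - γ)) (Ioo 0 (r ^ γ)) := fun t ht => if_neg (not_le.2 ht.2)
    have heq2 : EqOn (fun t => if r ^ γ ≤ t then t ^ (-(d/γ)) else t * r ^ (-d - γ))
        (fun t : ℝ => t ^ (-(d/γ))) (Ioc (r ^ γ) T) := fun t ht => if_pos ht.1.le
    have hcont : ContinuousOn (fun t : ℝ => t ^ (-(d/γ))) (Icc (r ^ γ) T) :=
      ContinuousOn.rpow_const continuousOn_id fun x hx => Or.inl (lt_of_lt_of_le hs hx.1).ne'
    have int2 : IntegrableOn (fun t => if r ^ γ ≤ t then t ^ (-(d/γ)) else t * r ^ (-d - γ))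
        (Ioc (r ^ γ) T) :=
      ((hcont.integrableOn_Icc).mono_set Ioc_subset_Icc_self).congr_fun heq2.symm measurableSet_Ioc
    have int1 : IntegrableOn (fun t => if r ^ γ ≤ t then t ^ (-(d/γ)) else t * r ^ (-d - γ))
        (Ioc 0 (r ^ γ)) := by
      rw [integrableOn_Ioc_iff_integrableOn_Ioo]
      exact (((continuous_id.mul continuous_const).integrableOn_Icc).mono_set
        Ioo_subset_Icc_self).congr_fun heq1.symm measurableSet_Ioo
    have hsplit : (∫ t in Ioc (0:ℝ) T, if r ^ γ ≤ t then t ^ (-(d/γ)) else t * r ^ (-d - γ))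
        = (∫ t in Ioc (0:ℝ) (r ^ γ), if r ^ γ ≤ t then t ^ (-(d/γ)) else t * r ^ (-d - γ))
          + ∫ t in Ioc (r ^ γ) T, if r ^ γ ≤ t then t ^ (-(d/γ)) else t * r ^ (-d - γ) := by
      rw [← Set.Ioc_union_Ioc_eq_Ioc hs.le hsT,
        setIntegral_union (Set.Ioc_disjoint_Ioc_of_le le_rfl) measurableSet_Ioc int1 int2]
    have val1 : (∫ t in Ioc (0:ℝ) (r ^ γ), if r ^ γ ≤ t then t ^ (-(d/γ)) else t * r ^ (-d - γ))
        = ((r ^ γ) ^ 2 - 0 ^ 2) / 2 * r ^ (-d - γ) := by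
      rw [integral_Ioc_eq_integral_Ioo, setIntegral_congr_fun measurableSet_Ioo heq1,
        ← integral_Ioc_eq_integral_Ioo, ← intervalIntegral.integral_of_le hs.le,
        intervalIntegral.integral_mul_const, integral_id]
    have val2 : (∫ t in Ioc (r ^ γ) T, if r ^ γ ≤ t then t ^ (-(d/γ)) else t * r ^ (-d - γ))
        = ∫ t in (r ^ γ)..T, t ^ (-(d/γ)) := by
      rw [setIntegral_congr_fun measurableSet_Ioc heq2, intervalIntegral.integral_of_le hsT]
    rw [hsplit, val1, val2]
    have h2 := htail r hr hr1 hsT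
    nlinarith [hid]
  · have heq : EqOn (fun t => if r ^ γ ≤ t then t ^ (-(d/γ)) else t * r ^ (-d - γ))
        (fun t => t * r ^ (-d - γ)) (Ioc 0 T) :=
      fun t ht => if_neg (not_le.2 (lt_of_le_of_lt ht.2 hsT))
    rw [setIntegral_congr_fun measurableSet_Ioc heq, ← intervalIntegral.integral_of_le hT.le,
      intervalIntegral.integral_mul_const, integral_id]
    have hT2 : T ^ 2 ≤ (r ^ γ) ^ 2 := by nlinarith
    nlinarith [mul_le_mul_of_nonneg_right hT2 hc0, hid, mul_nonneg hC₁.le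
      (by linarith : (0:ℝ) ≤ 1 + |Real.log r| + r ^ (-d + γ))]

open MeasureTheory in
/-- Time-integrated heat kernel bound: the piecewise kernel bound `S(z,t)`
integrated over `t ∈ (0,T]` is dominated by `C·Q(z)`. -/
theorem heatKernel_time_integral_bound (d : ℕ) (T : ℝ) (hT : 0 < T)
    (γinf γ0 : ℝ) (hγinf : γinf ∈ Set.Ioc (0:ℝ) 2) (hγ0 : γ0 ∈ Set.Ioc (0:ℝ) 2)
    (S : EuclideanSpace ℝ (Fin d) → ℝ → ℝ)
    (hS : ∀ (z : EuclideanSpace ℝ (Fin d)) (t : ℝ),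
      S z t = if ‖z‖ ≤ min (t ^ (1/γinf)) 1 then t ^ (-(d:ℝ)/γinf)
        else if ‖z‖ ≤ 1 then t * ‖z‖ ^ (-(d:ℝ) - γinf)
        else t * ‖z‖ ^ (-(d:ℝ) - min γinf γ0))
    (Q : EuclideanSpace ℝ (Fin d) → ℝ)
    (hQ : ∀ z : EuclideanSpace ℝ (Fin d),
      Q z = if 1 ≤ ‖z‖ then ‖z‖ ^ (-(d:ℝ) - min γ0 γinf)
        else 1 + |Real.log ‖z‖| + ‖z‖ ^ (-(d:ℝ) + γinf)) :
    ∃ C > (0:ℝ), ∀ z : EuclideanSpace ℝ (Fin d), z ≠ 0 →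
      (∫ t in Set.Ioc (0:ℝ) T, S z t) ≤ C * Q z := by
  obtain ⟨C₁, hC₁, hsmall⟩ := small_bound (d:ℝ) γinf T hγinf.1 hγinf.2 hT
  refine ⟨max (T^2/2) (2*C₁), lt_max_of_lt_right (by linarith), ?_⟩
  intro z hz
  have hr : 0 < ‖z‖ := norm_pos_iff.mpr hz
  rcases le_or_gt ‖z‖ 1 with h1 | h1
  · -- ‖z‖ ≤ 1
    have heq : EqOn (S z)
        (fun t => if ‖z‖ ^ γinf ≤ t then t ^ (-((d:ℝ)/γinf)) else t * ‖z‖ ^ (-(d:ℝ) - γinf))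
        (Ioc 0 T) := by
      intro t ht
      rw [hS]
      show _ = if ‖z‖ ^ γinf ≤ t then t ^ (-((d:ℝ)/γinf)) else t * ‖z‖ ^ (-(d:ℝ) - γinf)
      have hiff : (‖z‖ ≤ min (t ^ (1/γinf)) 1) ↔ ‖z‖ ^ γinf ≤ t := by
        rw [le_min_iff]
        constructor
        · rintro ⟨hle, -⟩
          have h2 := Real.rpow_le_rpow hr.le hle hγinf.1.le
          rwa [← Real.rpow_mul ht.1.le, one_div_mul_cancel hγinf.1.ne', Real.rpow_one] at h2
        · intro hle
          refine ⟨?_, h1⟩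
          have h2 := Real.rpow_le_rpow (Real.rpow_nonneg hr.le γinf) hle
            (one_div_nonneg.mpr hγinf.1.le)
          rwa [← Real.rpow_mul hr.le, mul_one_div_cancel hγinf.1.ne', Real.rpow_one] at h2
      by_cases hc : ‖z‖ ^ γinf ≤ t
      · rw [if_pos (hiff.mpr hc), if_pos hc, neg_div]
      · rw [if_neg (fun hh => hc (hiff.mp hh)), if_pos h1, if_neg hc]
    rw [setIntegral_congr_fun measurableSet_Ioc heq]
    have hb := hsmall ‖z‖ hr h1
    have hCle : C₁ ≤ max (T^2/2) (2*C₁) := le_trans (by linarith) (le_max_right _ _)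
    rcases eq_or_lt_of_le h1 with he | hlt
    · -- ‖z‖ = 1
      rw [he] at hb ⊢
      rw [hQ, he, if_pos le_rfl, Real.one_rpow]
      simp only [Real.one_rpow, Real.log_one, abs_zero, mul_one] at hb ⊢
      exact le_trans hb (by linarith [le_max_right (T^2/2) (2*C₁)])
    · -- ‖z‖ < 1
      rw [hQ, if_neg (not_le.2 hlt)]
      refine le_trans hb (mul_le_mul_of_nonneg_right hCle ?_)
      have := Real.rpow_nonneg hr.le (-(d:ℝ) + γinf)
      linarith [abs_nonneg (Real.log ‖z‖)]
  · -- 1 < ‖z‖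
    have heq : EqOn (S z) (fun t => t * ‖z‖ ^ (-(d:ℝ) - min γinf γ0)) (Ioc 0 T) := by
      intro t ht
      rw [hS, if_neg (fun hh => absurd (le_trans hh (min_le_right _ _)) (not_le.2 h1)),
        if_neg (not_le.2 h1)]
    rw [setIntegral_congr_fun measurableSet_Ioc heq, ← intervalIntegral.integral_of_le hT.le,
      intervalIntegral.integral_mul_const, integral_id, hQ, if_pos h1.le, min_comm γ0 γinf]
    have hQpos : (0:ℝ) < ‖z‖ ^ (-(d:ℝ) - min γinf γ0) := Real.rpow_pos_of_pos hr _
    have : (T^2 - 0^2)/2 = T^2/2 := by norm_num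
    rw [this]
    exact mul_le_mul_of_nonneg_right (le_max_left _ _) hQpos.le
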